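/- Let P be a meromorphic family of polynomials of degree d ≥ 2 parametrized by the punctured unit disk 𝔻*. Then there exists a constant C > 0 such that for all t with 0 < |t| < 1/2 and all z ∈ ℂ: |(1/d) log⁺|P_t(z)| − log⁺|z|| ≤ C · log(1/|t|). -/

import Mathlib

open Metric

/-- A function belongs to the ring `𝕄` when it is holomorphic on the punctured unit disk and
meromorphic at `0`, i.e. of the form `t ↦ h(t)/t^N` with `h` holomorphic on the unit disk. -/
def MeroAtZero (f : ℂ → ℂ) : Prop :=
  ∃ (h : ℂ → ℂ) (N : ℕ), DifferentiableOn ℂ h (ball (0 : ℂ) 1) ∧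
    ∀ t ∈ ball (0 : ℂ) 1 \ {0}, f t = h t / t ^ N

lemma mero_upper {f : ℂ → ℂ} (hf : MeroAtZero f) :
    ∃ (K : ℝ) (N : ℕ), 1 ≤ K ∧ ∀ t : ℂ, 0 < ‖t‖ → ‖t‖ < 1/2 →
      ‖f t‖ ≤ K / ‖t‖ ^ N := by
  obtain ⟨h, N, hh, heq⟩ := hf
  obtain ⟨M, hM⟩ := (isCompact_closedBall (0:ℂ) (1/2)).exists_bound_of_continuousOn
    (hh.continuousOn.mono (closedBall_subset_ball (by norm_num)))
  refine ⟨max M 1, N, le_max_right _ _, fun t ht0 ht2 => ?_⟩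
  have htmem : t ∈ ball (0:ℂ) 1 \ {0} := by
    constructor
    · simpa [Complex.dist_eq] using lt_trans ht2 (by norm_num)
    · simp only [Set.mem_singleton_iff]
      intro h0; rw [h0] at ht0; simp at ht0
  rw [heq t htmem, norm_div, norm_pow]
  have hb : ‖h t‖ ≤ max M 1 := by
    refine le_trans ?_ (le_max_left M 1)
    simpa using hM t (by simpa [Complex.dist_eq] using ht2.le)
  have hpow : (0:ℝ) < ‖t‖ ^ N := pow_pos ht0 N
  gcongr

lemma mem_punct {t : ℂ} (ht0 : 0 < ‖t‖) (ht1 : ‖t‖ < 1) :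
    t ∈ ball (0:ℂ) 1 \ {0} := by
  constructor
  · simpa [Complex.dist_eq] using ht1
  · simp only [Set.mem_singleton_iff]
    intro h0; rw [h0] at ht0; simp at ht0

lemma mero_lower {f : ℂ → ℂ} (hf : MeroAtZero f)
    (hne : ∀ t ∈ ball (0:ℂ) 1 \ {0}, f t ≠ 0) :
    ∃ (k : ℝ) (m : ℕ), 0 < k ∧ k ≤ 1 ∧ ∀ t : ℂ, 0 < ‖t‖ → ‖t‖ < 1/2 →
      k * ‖t‖ ^ m ≤ ‖f t‖ := by
  obtain ⟨h, N, hh, heq⟩ := hf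
  have hhne : ∀ t ∈ ball (0:ℂ) 1 \ {0}, h t ≠ 0 := by
    intro t ht h0
    exact hne t ht (by rw [heq t ht, h0, zero_div])
  have hA : AnalyticAt ℂ h 0 := hh.analyticAt (ball_mem_nhds _ one_pos)
  -- order is finite
  have hord : analyticOrderAt h 0 ≠ ⊤ := by
    intro htop
    rw [analyticOrderAt_eq_top] at htop
    rw [Metric.eventually_nhds_iff] at htop
    obtain ⟨ε, hε, hz⟩ := htop
    set t : ℂ := (min ε 1) / 2
    have habs : ‖t‖ = min ε 1 / 2 := by
      simp [t, norm_div, Complex.norm_real, Real.norm_eq_abs, abs_of_pos (lt_min hε one_pos)]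
    have ht0 : 0 < ‖t‖ := by rw [habs]; positivity
    have ht1 : ‖t‖ < 1 := by
      rw [habs]; have := min_le_right ε 1; linarith
    refine hhne t (mem_punct ht0 ht1) (hz ?_)
    rw [Complex.dist_eq, sub_zero, habs]
    have := min_le_left ε 1; linarith
  obtain ⟨m, hm⟩ := WithTop.ne_top_iff_exists.mp hord
  obtain ⟨g, hg, hg0, hfac⟩ := (hA.analyticOrderAt_eq_natCast).mp hm.symm
  rw [Metric.eventually_nhds_iff] at hfac
  obtain ⟨ε₁, hε₁, hfac⟩ := hfac
  -- continuity of g at 0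
  have hgc : ContinuousAt g 0 := hg.continuousAt
  rw [Metric.continuousAt_iff] at hgc
  obtain ⟨ε₂, hε₂, hgε⟩ := hgc (‖g 0‖ / 2) (by simpa using hg0)
  set r : ℝ := min (min ε₁ ε₂) (1/2) with hr
  have hr0 : 0 < r := lt_min (lt_min hε₁ hε₂) (by norm_num)
  have hr2 : r ≤ 1/2 := min_le_right _ _
  -- min of |h| on the annulus
  have hcomp : IsCompact (closedBall (0:ℂ) (1/2) \ ball 0 r) :=
    (isCompact_closedBall _ _).diff isOpen_ball
  have hne' : (closedBall (0:ℂ) (1/2) \ ball 0 r).Nonempty := by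
    refine ⟨(1/2 : ℂ), ?_, ?_⟩
    · simp [Complex.dist_eq]
    · simp only [mem_ball, Complex.dist_eq, sub_zero, not_lt]
      calc r ≤ 1/2 := hr2
        _ ≤ ‖(1/2 : ℂ)‖ := by norm_num
  have hcont : ContinuousOn (fun x => ‖h x‖) (closedBall (0:ℂ) (1/2) \ ball 0 r) :=
    continuous_norm.comp_continuousOn
      (hh.continuousOn.mono (fun x hx =>
        mem_ball.mpr (lt_of_le_of_lt (mem_closedBall.mp hx.1) (by norm_num))))
  obtain ⟨x₀, hx₀, hmin⟩ := hcomp.exists_isMinOn hne' hcont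
  set δ : ℝ := ‖h x₀‖ with hδ
  have hx₀mem : x₀ ∈ ball (0:ℂ) 1 \ {0} := by
    obtain ⟨hx1, hx2⟩ := hx₀
    refine mem_punct ?_ ?_
    · have : r ≤ ‖x₀‖ := by
        by_contra hc
        exact hx2 (by simpa [Complex.dist_eq] using lt_of_not_ge hc)
      linarith
    · have := mem_closedBall.mp hx1
      rw [Complex.dist_eq, sub_zero] at this
      linarith
  have hδ0 : 0 < δ := by
    rw [hδ]
    exact norm_pos_iff.mpr (hhne x₀ hx₀mem)
  set k : ℝ := min (min (‖g 0‖ / 2) δ) 1 with hk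
  have hk0 : 0 < k := lt_min (lt_min (by simpa using (norm_pos_iff.mpr hg0)) hδ0) one_pos
  refine ⟨k, m, hk0, min_le_right _ _, fun t ht0 ht2 => ?_⟩
  have htpow1 : ‖t‖ ^ m ≤ 1 := pow_le_one₀ ht0.le (by linarith)
  -- |h t| ≥ k |t|^m
  have hht : k * ‖t‖ ^ m ≤ ‖h t‖ := by
    rcases lt_or_ge (‖t‖) r with hlt | hge
    · -- near 0: factorization
      have heq2 : h t = t ^ m * g t := by
        have hd1 : dist t 0 < ε₁ := by
          rw [Complex.dist_eq, sub_zero]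
          exact lt_of_lt_of_le hlt (le_trans (min_le_left _ _) (min_le_left _ _))
        simpa using hfac hd1
      rw [heq2, norm_mul, norm_pow]
      have hgt : ‖g 0‖ / 2 ≤ ‖g t‖ := by
        have hd : dist t 0 < ε₂ := by
          rw [Complex.dist_eq, sub_zero]
          exact lt_of_lt_of_le hlt (le_trans (min_le_left _ _) (min_le_right _ _))
        have := hgε hd
        have h3 : ‖g 0‖ - ‖g t‖ ≤ ‖g t - g 0‖ := by
          have := norm_sub_le (g 0) (g t)
          have h4 : ‖g 0‖ ≤ ‖g t - g 0‖ + ‖g t‖ := by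
            calc ‖g 0‖ = ‖(g 0 - g t) + g t‖ := by ring_nf
              _ ≤ ‖g 0 - g t‖ + ‖g t‖ := norm_add_le _ _
              _ = ‖g t - g 0‖ + ‖g t‖ := by rw [← norm_neg (g 0 - g t)]; ring_nf
          linarith
        rw [Complex.dist_eq] at this
        linarith
      calc k * ‖t‖ ^ m ≤ (‖g 0‖ / 2) * ‖t‖ ^ m := by
            apply mul_le_mul_of_nonneg_right _ (by positivity)
            exact le_trans (min_le_left _ _) (min_le_left _ _)
        _ = ‖t‖ ^ m * (‖g 0‖ / 2) := mul_comm _ _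
        _ ≤ ‖t‖ ^ m * ‖g t‖ := by
            apply mul_le_mul_of_nonneg_left hgt (by positivity)
    · -- on the annulus
      have htA : t ∈ closedBall (0:ℂ) (1/2) \ ball 0 r := by
        constructor
        · simpa [Complex.dist_eq] using ht2.le
        · simp [Complex.dist_eq]
          exact hge
      have := hmin htA
      calc k * ‖t‖ ^ m ≤ δ * 1 := by
            apply mul_le_mul (le_trans (min_le_left _ _) (min_le_right _ _)) htpow1 (by positivity) hδ0.le
        _ = δ := mul_one _
        _ ≤ ‖h t‖ := this
  -- conclude for f
  have htmem := mem_punct ht0 (by linarith)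
  rw [heq t htmem, norm_div, norm_pow]
  have hNpow : ‖t‖ ^ N ≤ 1 := pow_le_one₀ ht0.le (by linarith)
  have hNpow0 : 0 < ‖t‖ ^ N := pow_pos ht0 N
  calc k * ‖t‖ ^ m ≤ ‖h t‖ := hht
    _ ≤ ‖h t‖ / ‖t‖ ^ N := by
        rw [le_div_iff₀ hNpow0]
        exact mul_le_of_le_one_right (by positivity) hNpow

lemma logp_le {x y : ℝ} (hx : 0 ≤ x) (hy : 1 ≤ y) (hxy : x ≤ y) :
    max (Real.log x) 0 ≤ Real.log y := by
  refine max_le ?_ (Real.log_nonneg hy)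
  rcases eq_or_lt_of_le hx with h | h
  · rw [← h, Real.log_zero]; exact Real.log_nonneg hy
  · exact Real.log_le_log h hxy

set_option maxHeartbeats 1000000 in
/-- For a meromorphic family `P_t(z) = ∑_{i=0}^d a_i(t) z^i` of degree `d ≥ 2` polynomials
parametrized by the punctured unit disk, there is `C > 0` such that
`|(1/d) log⁺|P_t(z)| − log⁺|z|| ≤ C log(1/|t|)` for `0 < |t| < 1/2` and all `z`. -/
theorem stmt12 (d : ℕ) (hd : 2 ≤ d) (a : ℕ → ℂ → ℂ)
    (ha : ∀ i, i ≤ d → MeroAtZero (a i))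
    (had : ∀ t ∈ ball (0 : ℂ) 1 \ {0}, a d t ≠ 0) :
    ∃ C : ℝ, 0 < C ∧ ∀ t : ℂ, 0 < ‖t‖ → ‖t‖ < 1 / 2 → ∀ z : ℂ,
      |(d : ℝ)⁻¹ * max (Real.log (‖∑ i ∈ Finset.range (d + 1), a i t * z ^ i‖)) 0
          - max (Real.log (‖z‖)) 0| ≤ C * Real.log (1 / ‖t‖) := by
  -- uniform upper bound on coefficients
  obtain ⟨K, N, hK1, hKb⟩ : ∃ (K : ℝ) (N : ℕ), 1 ≤ K ∧ ∀ i, i ≤ d → ∀ t : ℂ,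
      0 < ‖t‖ → ‖t‖ < 1/2 →
      ‖a i t‖ ≤ K / ‖t‖ ^ N := by
    have H : ∀ i : Fin (d+1), ∃ (K : ℝ) (N : ℕ), 1 ≤ K ∧ ∀ t : ℂ, 0 < ‖t‖ →
        ‖t‖ < 1/2 → ‖a i t‖ ≤ K / ‖t‖ ^ N :=
      fun i => mero_upper (ha i (by omega))
    choose Kf Nf h1 h2 using H
    have hKsup : (1:ℝ) ≤ Finset.univ.sup' Finset.univ_nonempty Kf :=
      le_trans (h1 ⟨0, by omega⟩) (Finset.le_sup' Kf (Finset.mem_univ _))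
    refine ⟨Finset.univ.sup' Finset.univ_nonempty Kf, Finset.univ.sup Nf, hKsup, ?_⟩
    intro i hi t ht0 ht2
    have hτ1 : ‖t‖ ≤ 1 := by linarith
    refine le_trans (h2 ⟨i, by omega⟩ t ht0 ht2) ?_
    exact div_le_div₀ (by linarith) (Finset.le_sup' Kf (Finset.mem_univ _))
      (pow_pos ht0 _)
      (pow_le_pow_of_le_one ht0.le hτ1 (Finset.le_sup (Finset.mem_univ _)))
  -- lower bound on leading coefficient
  obtain ⟨k, m, hk0, hk1, hkb⟩ := mero_lower (ha d le_rfl) had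
  have hkne : k ≠ 0 := ne_of_gt hk0
  set B : ℝ := 2 * (d+1) * K / k with hBdef
  have hdK1 : (1:ℝ) ≤ (d+1) * K := by
    have h1 : (1:ℝ) ≤ (d:ℝ)+1 := by
      have : (0:ℝ) ≤ (d:ℝ) := Nat.cast_nonneg d
      linarith only [this]
    calc (1:ℝ) ≤ (d:ℝ)+1 := h1
      _ ≤ ((d:ℝ)+1) * K := le_mul_of_one_le_right (by linarith only [h1]) hK1
  have hB2 : (2:ℝ) ≤ B := by
    have h1 : (2:ℝ) ≤ 2 * (d+1) * K := by linarith only [hdK1]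
    calc (2:ℝ) ≤ 2 * (d+1) * K := h1
      _ ≤ B := le_div_self (by linarith only [h1]) hk0 hk1
  set c₁ : ℝ := Real.log B with hc₁def
  have hc₁ : Real.log 2 ≤ c₁ := Real.log_le_log two_pos hB2
  have hlog2 : (0:ℝ) < Real.log 2 := Real.log_pos one_lt_two
  have hc₁0 : 0 < c₁ := lt_of_lt_of_le hlog2 hc₁
  set C : ℝ := c₁ / Real.log 2 + ((N : ℝ) + m + 1) with hCdef
  have hC0 : 0 < C := by
    have h1 : 0 < c₁ / Real.log 2 := div_pos hc₁0 hlog2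
    have h2 : (0:ℝ) ≤ (N:ℝ) + m + 1 := by positivity
    rw [hCdef]; linarith only [h1, h2]
  clear_value c₁ C
  have hlogdK : Real.log ((d+1) * K) ≤ c₁ := by
    rw [hc₁def]
    refine Real.log_le_log (by linarith only [hdK1]) ?_
    calc ((d:ℝ)+1) * K ≤ 2 * (d+1) * K := by linarith only [hdK1]
      _ ≤ B := le_div_self (by linarith only [hdK1]) hk0 hk1
  have hlog2k : Real.log 2 - Real.log k ≤ c₁ := by
    have he : Real.log 2 - Real.log k = Real.log (2 / k) :=
      (Real.log_div two_ne_zero hkne).symm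
    rw [he, hc₁def, hBdef]
    refine Real.log_le_log (by positivity) ?_
    gcongr
    linarith only [hdK1]
  clear_value B
  refine ⟨C, hC0, fun t ht0 ht2 z => ?_⟩
  set τ : ℝ := ‖t‖ with hτdef
  have hτne : τ ≠ 0 := ne_of_gt ht0
  have hτ1 : τ < 1 := by linarith only [ht2]
  have hcoef : ∀ i, i ≤ d → ‖a i t‖ ≤ K / τ ^ N := by
    intro i hi
    rw [hτdef]
    exact hKb i hi t (by rw [← hτdef]; exact ht0) (by rw [← hτdef]; exact ht2)
  have hlead0 : k * τ ^ m ≤ ‖a d t‖ := by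
    rw [hτdef]
    exact hkb t (by rw [← hτdef]; exact ht0) (by rw [← hτdef]; exact ht2)
  set L : ℝ := Real.log (1/τ) with hLdef
  have hLτ : Real.log τ = -L := by rw [hLdef, one_div, Real.log_inv, neg_neg]
  have hL2 : Real.log 2 ≤ L := by
    rw [hLdef]
    refine Real.log_le_log two_pos ?_
    rw [le_div_iff₀ ht0]; linarith only [ht2]
  have hL0 : 0 < L := lt_of_lt_of_le hlog2 hL2
  clear_value τ L
  clear hKb hkb
  -- C*L dominates c₁ + (N+m)*L
  have hCL : c₁ + ((N:ℝ) + m) * L ≤ C * L := by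
    have h1 : c₁ ≤ (c₁ / Real.log 2) * L := by
      rw [div_mul_eq_mul_div, le_div_iff₀ hlog2]
      exact mul_le_mul_of_nonneg_left hL2 hc₁0.le
    have h2 : C * L = (c₁ / Real.log 2) * L + ((N:ℝ) + m) * L + L := by
      rw [hCdef]; ring
    linarith only [h1, h2, hL0.le]
  have hτN0 : (0:ℝ) < τ ^ N := pow_pos ht0 N
  have hτN1 : τ ^ N ≤ 1 := pow_le_one₀ ht0.le hτ1.le
  have hτm0 : (0:ℝ) < τ ^ m := pow_pos ht0 m
  have hτm1 : τ ^ m ≤ 1 := pow_le_one₀ ht0.le hτ1.le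
  set S : ℂ := ∑ i ∈ Finset.range (d + 1), a i t * z ^ i with hSdef
  set Pp : ℝ := max (Real.log (‖S‖)) 0 with hPpdef
  set zp : ℝ := max (Real.log (‖z‖)) 0 with hzpdef
  clear_value S Pp zp
  have hPp0 : 0 ≤ Pp := by rw [hPpdef]; exact le_max_right _ _
  have hzp0 : 0 ≤ zp := by rw [hzpdef]; exact le_max_right _ _
  have hd0 : (0:ℝ) < d := by exact_mod_cast (by omega : 0 < d)
  have hdne : (d:ℝ) ≠ 0 := ne_of_gt hd0
  have hdinv0 : (0:ℝ) ≤ (d:ℝ)⁻¹ := by positivity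
  have hdinv1 : (d:ℝ)⁻¹ ≤ 1 := by
    rw [inv_le_one_iff₀]; right; exact_mod_cast (by omega : 1 ≤ d)
  have hz0 : 0 ≤ ‖z‖ := norm_nonneg z
  rw [abs_le]
  constructor
  · -- lower: zp - d⁻¹ Pp ≤ C L
    rw [neg_le, neg_sub]
    set R : ℝ := B * (τ⁻¹) ^ (N + m) with hRdef
    have hτinv1 : (1:ℝ) ≤ τ⁻¹ := (one_le_inv₀ ht0).mpr hτ1.le
    have hpowinv : (1:ℝ) ≤ (τ⁻¹) ^ (N+m) := one_le_pow₀ hτinv1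
    have hRB : B ≤ R := by
      rw [hRdef]; exact le_mul_of_one_le_right (by linarith) hpowinv
    have hlogR : Real.log R = c₁ + ((N:ℝ)+m) * L := by
      rw [hRdef, Real.log_mul (by linarith) (ne_of_gt (lt_of_lt_of_le one_pos hpowinv)),
        Real.log_pow, Real.log_inv, hLτ, hc₁def]
      push_cast; ring
    clear_value R
    rcases le_or_gt (‖z‖) R with hzR | hzR
    · -- small z
      have hzpR : zp ≤ Real.log R := by
        rw [hzpdef]; exact logp_le hz0 (by linarith) hzR
      have h1 : 0 ≤ (d:ℝ)⁻¹ * Pp := mul_nonneg hdinv0 hPp0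
      rw [hlogR] at hzpR
      linarith only [h1, hzpR, hCL]
    · -- big z
      have hz1 : 1 < ‖z‖ := by linarith only [hzR, hRB, hB2]
      have hzpos : (0:ℝ) < ‖z‖ := by linarith only [hz1]
      have hzp_eq : zp = Real.log (‖z‖) := by
        rw [hzpdef]; exact max_eq_left (Real.log_nonneg hz1.le)
      set T : ℂ := ∑ i ∈ Finset.range d, a i t * z ^ i with hTdef
      clear_value T
      have hsplit : S = T + a d t * z ^ d := by
        rw [hSdef, hTdef]; exact Finset.sum_range_succ _ _
      have htail : ‖T‖ ≤ d * (K / τ ^ N) * ‖z‖ ^ (d-1) := by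
        rw [hTdef]
        calc ‖∑ i ∈ Finset.range d, a i t * z ^ i‖
            ≤ ∑ i ∈ Finset.range d, ‖a i t * z ^ i‖ :=
              norm_sum_le _ _
          _ ≤ ∑ _i ∈ Finset.range d, (K / τ ^ N) * ‖z‖ ^ (d-1) := by
              refine Finset.sum_le_sum fun i hi => ?_
              rw [norm_mul, norm_pow]
              have h1 : ‖a i t‖ ≤ K / τ ^ N := hcoef i (Finset.mem_range.mp hi).le
              have h2 : ‖z‖ ^ i ≤ ‖z‖ ^ (d-1) := by
                refine pow_le_pow_right₀ hz1.le ?_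
                have := Finset.mem_range.mp hi; omega
              exact mul_le_mul h1 h2 (pow_nonneg hz0 i)
                (div_nonneg (by linarith only [hK1]) hτN0.le)
          _ = d * (K / τ ^ N) * ‖z‖ ^ (d-1) := by
              rw [Finset.sum_const, Finset.card_range, nsmul_eq_mul]; ring
      have hlead : k * τ ^ m * ‖z‖ ^ d ≤ ‖a d t * z ^ d‖ := by
        rw [norm_mul, norm_pow]
        exact mul_le_mul_of_nonneg_right hlead0 (pow_nonneg hz0 d)
      have hkey : d * (K / τ ^ N) * ‖z‖ ^ (d-1)
          ≤ k * τ ^ m * ‖z‖ ^ d / 2 := by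
        have hRval : k * τ ^ m * R = 2 * (d+1) * K / τ ^ N := by
          rw [hRdef, hBdef]
          field_simp
          rw [pow_add, one_div, inv_pow, inv_pow]
          field_simp
        have hd1 : d * (K / τ ^ N) ≤ k * τ ^ m * ‖z‖ / 2 := by
          have h1 : k * τ ^ m * R ≤ k * τ ^ m * ‖z‖ :=
            mul_le_mul_of_nonneg_left hzR.le (mul_nonneg hk0.le hτm0.le)
          rw [hRval] at h1
          have h3 : (0:ℝ) ≤ K / τ ^ N := div_nonneg (by linarith only [hK1]) hτN0.le
          have h4 : 2 * ((d:ℝ) + 1) * K / τ ^ N = 2 * ((d:ℝ)+1) * (K / τ ^ N) := by ring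
          rw [h4] at h1
          generalize K / τ ^ N = P at h1 h3 ⊢
          generalize k * τ ^ m * ‖z‖ = W at h1 ⊢
          linarith only [h1, h3]
        have hpowsplit : ‖z‖ ^ d = ‖z‖ ^ (d-1) * ‖z‖ := by
          rw [← pow_succ]; congr 1; omega
        calc d * (K / τ ^ N) * ‖z‖ ^ (d-1)
            ≤ (k * τ ^ m * ‖z‖ / 2) * ‖z‖ ^ (d-1) :=
              mul_le_mul_of_nonneg_right hd1 (pow_nonneg hz0 (d-1))
          _ = k * τ ^ m * ‖z‖ ^ d / 2 := by rw [hpowsplit]; ring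
      have hSlow : k * τ ^ m * ‖z‖ ^ d / 2 ≤ ‖S‖ := by
        have h1 : ‖a d t * z ^ d‖ = ‖S - T‖ := by
          rw [hsplit]; congr 1; ring
        have h2 : ‖S - T‖ ≤ ‖S‖ + ‖T‖ := by
          simpa [sub_eq_add_neg] using norm_add_le S (-T)
        rw [h1] at hlead
        linarith only [hlead, htail, hkey, h2]
      have hq0 : (0:ℝ) < k * τ ^ m * ‖z‖ ^ d / 2 := by
        have h1 := mul_pos (mul_pos hk0 hτm0) (pow_pos hzpos d)
        linarith only [h1]
      have hSpos : 0 < ‖S‖ := lt_of_lt_of_le hq0 hSlow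
      have hlogS : Real.log k + m * Real.log τ + d * Real.log (‖z‖) - Real.log 2
          ≤ Real.log (‖S‖) := by
        have h1 := Real.log_le_log hq0 hSlow
        rw [Real.log_div (ne_of_gt (mul_pos (mul_pos hk0 hτm0) (pow_pos hzpos d)))
            two_ne_zero,
          Real.log_mul (ne_of_gt (mul_pos hk0 hτm0)) (ne_of_gt (pow_pos hzpos d)),
          Real.log_mul hkne (ne_of_gt hτm0), Real.log_pow, Real.log_pow] at h1
        linarith only [h1]
      have hPpS : Real.log (‖S‖) ≤ Pp := by
        rw [hPpdef]; exact le_max_left _ _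
      have hY0 : 0 ≤ Real.log 2 - Real.log k + m * L := by
        have h1 : Real.log k ≤ 0 := Real.log_nonpos hk0.le hk1
        have h2 : (0:ℝ) ≤ (m:ℝ) * L := mul_nonneg (Nat.cast_nonneg m) hL0.le
        linarith only [h1, h2, hlog2.le]
      have hfinal : zp - (d:ℝ)⁻¹ * Pp ≤ (d:ℝ)⁻¹ * (Real.log 2 - Real.log k + m * L) := by
        have h1 : Real.log k - m * L + d * Real.log (‖z‖) - Real.log 2 ≤ Pp := by
          rw [hLτ] at hlogS
          linarith only [hlogS, hPpS]
        have h2 : (d:ℝ)⁻¹ * (Real.log k - m * L + d * Real.log (‖z‖) - Real.log 2)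
            ≤ (d:ℝ)⁻¹ * Pp := mul_le_mul_of_nonneg_left h1 hdinv0
        have h3 : (d:ℝ)⁻¹ * (Real.log k - m * L + d * Real.log (‖z‖) - Real.log 2)
            = Real.log (‖z‖) - (d:ℝ)⁻¹ * (Real.log 2 - Real.log k + m * L) := by
          field_simp
          ring
        rw [h3] at h2
        rw [hzp_eq]
        linarith only [h2]
      have h4 : (d:ℝ)⁻¹ * (Real.log 2 - Real.log k + m * L)
          ≤ Real.log 2 - Real.log k + m * L := mul_le_of_le_one_left hY0 hdinv1
      have h5 : Real.log 2 - Real.log k + m * L ≤ c₁ + ((N:ℝ) + m) * L := by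
        have h6 : (0:ℝ) ≤ (N:ℝ) * L := mul_nonneg (Nat.cast_nonneg N) hL0.le
        have h7 : ((N:ℝ) + m) * L = (N:ℝ) * L + (m:ℝ) * L := by ring
        linarith only [h6, h7, hlog2k]
      linarith only [hfinal, h4, h5, hCL]
  · -- upper: d⁻¹ Pp - zp ≤ C L
    set A : ℝ := (d+1) * K / τ ^ N with hAdef
    have hA1 : 1 ≤ A := le_trans hdK1 (le_div_self (by linarith only [hdK1]) hτN0 hτN1)
    have hA0 : (0:ℝ) < A := lt_of_lt_of_le one_pos hA1
    have hlogA : Real.log A = Real.log ((d+1)*K) + N * L := by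
      rw [hAdef, Real.log_div (ne_of_gt (lt_of_lt_of_le one_pos hdK1)) (ne_of_gt hτN0),
        Real.log_pow, hLτ]
      ring
    clear_value A
    set mx : ℝ := max (‖z‖) 1 with hmxdef
    have hmx1 : (1:ℝ) ≤ mx := by rw [hmxdef]; exact le_max_right _ _
    have hmx0 : (0:ℝ) < mx := lt_of_lt_of_le one_pos hmx1
    have hzmx : ‖z‖ ≤ mx := by rw [hmxdef]; exact le_max_left _ _
    have hzp_eq : zp = Real.log mx := by
      rcases le_or_gt 1 (‖z‖) with h | h
      · rw [hzpdef, hmxdef, max_eq_left h, max_eq_left (Real.log_nonneg h)]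
      · rw [hzpdef, hmxdef, max_eq_right h.le, Real.log_one, max_eq_right]
        exact Real.log_nonpos hz0 h.le
    clear_value mx
    have hSle : ‖S‖ ≤ A * mx ^ d := by
      rw [hSdef]
      calc ‖∑ i ∈ Finset.range (d+1), a i t * z ^ i‖
          ≤ ∑ i ∈ Finset.range (d+1), ‖a i t * z ^ i‖ :=
            norm_sum_le _ _
        _ ≤ ∑ _i ∈ Finset.range (d+1), (K / τ ^ N) * mx ^ d := by
            refine Finset.sum_le_sum fun i hi => ?_
            rw [norm_mul, norm_pow]
            have h1 : ‖a i t‖ ≤ K / τ ^ N := by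
              refine hcoef i ?_
              have := Finset.mem_range.mp hi; omega
            have h2 : ‖z‖ ^ i ≤ mx ^ d := by
              calc ‖z‖ ^ i ≤ mx ^ i := pow_le_pow_left₀ hz0 hzmx i
                _ ≤ mx ^ d := by
                    refine pow_le_pow_right₀ hmx1 ?_
                    have := Finset.mem_range.mp hi; omega
            exact mul_le_mul h1 h2 (pow_nonneg hz0 i)
              (div_nonneg (by linarith only [hK1]) hτN0.le)
        _ = A * mx ^ d := by
            rw [Finset.sum_const, Finset.card_range, nsmul_eq_mul, hAdef]
            push_cast; ring
    have hPple : Pp ≤ Real.log A + d * Real.log mx := by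
      have h1 : Real.log (A * mx ^ d) = Real.log A + d * Real.log mx := by
        rw [Real.log_mul (ne_of_gt hA0) (ne_of_gt (pow_pos hmx0 d)), Real.log_pow]
      rw [← h1, hPpdef]
      refine logp_le (norm_nonneg S) ?_ hSle
      have h2 : (1:ℝ) ≤ mx ^ d := one_le_pow₀ hmx1
      calc (1:ℝ) = 1 * 1 := by norm_num
        _ ≤ A * mx ^ d := mul_le_mul hA1 h2 zero_le_one (le_trans zero_le_one hA1)
    have hlogA0 : 0 ≤ Real.log A := Real.log_nonneg hA1
    have h2 : (d:ℝ)⁻¹ * Pp - zp ≤ (d:ℝ)⁻¹ * Real.log A := by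
      have h3 : (d:ℝ)⁻¹ * Pp ≤ (d:ℝ)⁻¹ * (Real.log A + d * Real.log mx) :=
        mul_le_mul_of_nonneg_left hPple hdinv0
      have h4 : (d:ℝ)⁻¹ * (Real.log A + d * Real.log mx)
          = (d:ℝ)⁻¹ * Real.log A + Real.log mx := by
        rw [mul_add, inv_mul_cancel_left₀ hdne]
      rw [h4] at h3
      rw [hzp_eq]
      linarith only [h3]
    have h5 : (d:ℝ)⁻¹ * Real.log A ≤ Real.log A := mul_le_of_le_one_left hlogA0 hdinv1
    have h6 : Real.log A ≤ c₁ + ((N:ℝ) + m) * L := by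
      rw [hlogA]
      have h7 : (0:ℝ) ≤ (m:ℝ) * L := mul_nonneg (Nat.cast_nonneg m) hL0.le
      have h8 : ((N:ℝ) + m) * L = (N:ℝ) * L + (m:ℝ) * L := by ring
      linarith only [h7, h8, hlogdK]
    linarith only [h2, h5, h6, hCL]
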